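/- Let n ≥ 3, C ≥ 0, let x ∈ ℝⁿ have nonnegative entries with x_1 + ⋯ + x_n = 1 and x_n < 1, and let s_1, …, s_{n−1} be real numbers with |s_i| ≤ C for all i. Set μ_i := x_i(1 − x_i) s_i and y_i := x_i/(1 − x_n) for i ≤ n−1, and define μ̃_i := μ_i − y_i ∑_{j=1}^{n−1} μ_j. Then for every i ≤ n−1, |μ̃_i| ≤ 2 C (1 − x_n) y_i (1 − y_i). -/
import Mathlib


open Finset

/-- Key bound in Lemma 5.2 (leminduction): the projected drift
μ̃_i = μ_i − y_i ∑_{j≤n−1} μ_j satisfies |μ̃_i| ≤ 2C(1−x_n) y_i(1−y_i). -/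
theorem stmt14 (n : ℕ) (hn : 3 ≤ n) (C : ℝ) (hC : 0 ≤ C)
    (x : ℕ → ℝ) (hx : ∀ i ∈ Icc 1 n, 0 ≤ x i)
    (hsum : ∑ i ∈ Icc 1 n, x i = 1) (hxn : x n < 1)
    (s : ℕ → ℝ) (hs : ∀ i ∈ Icc 1 (n - 1), |s i| ≤ C)
    (μ y μt : ℕ → ℝ)
    (hμ : ∀ i, μ i = x i * (1 - x i) * s i)
    (hy : ∀ i, y i = x i / (1 - x n))
    (hμt : ∀ i, μt i = μ i - y i * ∑ j ∈ Icc 1 (n - 1), μ j) :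
    ∀ i ∈ Icc 1 (n - 1), |μt i| ≤ 2 * C * (1 - x n) * (y i * (1 - y i)) := by
  intro i hi
  have hi' := hi
  simp only [mem_Icc] at hi'
  have hn1 : n - 1 + 1 = n := by omega
  have hT : 0 < 1 - x n := by linarith
  have hsplit : ∑ j ∈ Icc 1 n, x j = ∑ j ∈ Icc 1 (n-1), x j + x n := by
    rw [← hn1, Finset.sum_Icc_succ_top (by omega), hn1]
  have hsum' : ∑ j ∈ Icc 1 (n-1), x j = 1 - x n := by
    rw [hsplit] at hsum; linarith
  have hsub : Icc 1 (n-1) ⊆ Icc 1 n := Icc_subset_Icc_right (by omega)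
  have hx' : ∀ j ∈ Icc 1 (n-1), 0 ≤ x j := fun j hj => hx j (hsub hj)
  have hxi_le : x i ≤ 1 - x n := by
    rw [← hsum']; exact Finset.single_le_sum hx' hi
  have hxi0 : 0 ≤ x i := hx' i hi
  have hy0 : 0 ≤ y i := by rw [hy]; positivity
  have hy1 : y i ≤ 1 := by rw [hy, div_le_one hT]; exact hxi_le
  have hxiT : x i = (1 - x n) * y i := by
    rw [hy]; field_simp
  have hxle : ∀ j ∈ Icc 1 n, x j ≤ 1 := by
    intro j hj
    have h1 := Finset.single_le_sum (f := x) hx hj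
    linarith
  have hμb : ∀ j ∈ Icc 1 (n-1), |μ j| ≤ C * x j := by
    intro j hj
    have h0 : 0 ≤ x j := hx' j hj
    have h1 : x j ≤ 1 := hxle j (hsub hj)
    have hsj := hs j hj
    have habs : 0 ≤ |s j| := abs_nonneg _
    rw [hμ, abs_mul, abs_mul, abs_of_nonneg h0,
      abs_of_nonneg (by linarith : (0:ℝ) ≤ 1 - x j)]
    nlinarith [mul_le_mul_of_nonneg_left hsj h0, mul_nonneg (mul_nonneg h0 h0) habs]
  have hesplit : ∑ j ∈ Icc 1 (n-1), μ j = μ i + ∑ j ∈ (Icc 1 (n-1)).erase i, μ j :=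
    (Finset.add_sum_erase _ _ hi).symm
  have hform : μt i = (1 - y i) * μ i - y i * ∑ j ∈ (Icc 1 (n-1)).erase i, μ j := by
    rw [hμt, hesplit]; ring
  have hS : |∑ j ∈ (Icc 1 (n-1)).erase i, μ j| ≤ C * ((1 - x n) * (1 - y i)) := by
    calc |∑ j ∈ (Icc 1 (n-1)).erase i, μ j|
        ≤ ∑ j ∈ (Icc 1 (n-1)).erase i, |μ j| := Finset.abs_sum_le_sum_abs _ _
      _ ≤ ∑ j ∈ (Icc 1 (n-1)).erase i, C * x j :=
          Finset.sum_le_sum (fun j hj => hμb j (Finset.mem_of_mem_erase hj))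
      _ = C * ∑ j ∈ (Icc 1 (n-1)).erase i, x j := by rw [Finset.mul_sum]
      _ = C * ((1 - x n) - x i) := by rw [Finset.sum_erase_eq_sub hi, hsum']
      _ = C * ((1 - x n) * (1 - y i)) := by rw [hxiT]; ring
  have h1 : |(1 - y i) * μ i| ≤ (1 - y i) * (C * ((1 - x n) * y i)) := by
    rw [abs_mul, abs_of_nonneg (by linarith : (0:ℝ) ≤ 1 - y i)]
    have hb := hμb i hi
    rw [hxiT] at hb
    have : |μ i| ≤ C * ((1 - x n) * y i) := by linarith [hb]
    exact mul_le_mul_of_nonneg_left this (by linarith)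
  have h2 : |y i * ∑ j ∈ (Icc 1 (n-1)).erase i, μ j|
      ≤ y i * (C * ((1 - x n) * (1 - y i))) := by
    rw [abs_mul, abs_of_nonneg hy0]
    exact mul_le_mul_of_nonneg_left hS hy0
  rw [hform]
  calc |(1 - y i) * μ i - y i * ∑ j ∈ (Icc 1 (n-1)).erase i, μ j|
      ≤ |(1 - y i) * μ i| + |y i * ∑ j ∈ (Icc 1 (n-1)).erase i, μ j| := abs_sub _ _
    _ ≤ (1 - y i) * (C * ((1 - x n) * y i)) + y i * (C * ((1 - x n) * (1 - y i))) :=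
        add_le_add h1 h2
    _ = 2 * C * (1 - x n) * (y i * (1 - y i)) := by ring
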